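/- In the Whitney cone setup described in the context, for every y ∈ T_S one has dist(y, F(ℝ^d)) ≤ C · diam(S), where C depends only on θ and A. -/

import Mathlib

open Set Metric MeasureTheory ENNReal Filter Topology

noncomputable abbrev GraphSpace (d m : ℕ) :=
  WithLp 2 (EuclideanSpace ℝ (Fin d) × EuclideanSpace ℝ (Fin m))

/-- Orthogonal projection `Π : ℝⁿ = ℝᵈ × ℝ^{n-d} → ℝᵈ` onto the first factor. -/
noncomputable def proj1 {d m : ℕ} (y : GraphSpace d m) : EuclideanSpace ℝ (Fin d) :=
  (WithLp.equiv 2 (EuclideanSpace ℝ (Fin d) × EuclideanSpace ℝ (Fin m)) y).1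

/-- The subspace `V⊥ = {0} × ℝ^{n-d}`. -/
def VperpSet (d m : ℕ) : Set (GraphSpace d m) := {z | proj1 z = 0}

/-- `y ∈ X(x, V⊥, θ)`, i.e. `dist(y - x, V⊥) < cos θ · |y - x|`. -/
noncomputable def InPerpCone (θ : ℝ) {d m : ℕ} (x y : GraphSpace d m) : Prop :=
  infDist (y - x) (VperpSet d m) < Real.cos θ * dist y x

/-- The graph map `F(t) = (t, f(t))`. -/
noncomputable def graphMap {d m : ℕ} (f : EuclideanSpace ℝ (Fin d) → EuclideanSpace ℝ (Fin m))
    (t : EuclideanSpace ℝ (Fin d)) : GraphSpace d m :=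
  (WithLp.equiv 2 (EuclideanSpace ℝ (Fin d) × EuclideanSpace ℝ (Fin m))).symm (t, f t)

/-- The bad part `B(K)` of `E` inside the ball `B'`. -/
def badPart (θ r : ℝ) {d m : ℕ} (E K B' : Set (GraphSpace d m)) : Set (GraphSpace d m) :=
  {y | y ∈ E ∩ B' ∧ ∀ x ∈ K, ¬ (y ∈ ball x r ∧ InPerpCone θ x y)}

/-- The Whitney piece `T_S = (S × ℝ^{n-d}) ∩ B(K)`. -/
def whitneyPiece {d m : ℕ} (S : Set (EuclideanSpace ℝ (Fin d)))
    (BK : Set (GraphSpace d m)) : Set (GraphSpace d m) :=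
  {y ∈ BK | proj1 y ∈ S}

/-- Distance between two sets. -/
noncomputable def setEDist {α : Type*} [PseudoEMetricSpace α] (s t : Set α) : ℝ≥0∞ :=
  ⨅ y ∈ s, EMetric.infEdist y t

/-- An axis-parallel cube in `ℝᵈ`. -/
def IsCube {d : ℕ} (S : Set (EuclideanSpace ℝ (Fin d))) : Prop :=
  ∃ (c : EuclideanSpace ℝ (Fin d)) (l : ℝ), 0 < l ∧
    S = {t | ∀ i, c i ≤ t i ∧ t i ≤ c i + l}

section Aux
variable {d m : ℕ}

lemma proj1_sub (x y : GraphSpace d m) : proj1 (y - x) = proj1 y - proj1 x := rfl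

lemma infDist_vperp_le (z : GraphSpace d m) :
    Metric.infDist z (VperpSet d m) ≤ ‖proj1 z‖ := by
  have hw : ((WithLp.equiv 2 (EuclideanSpace ℝ (Fin d) × EuclideanSpace ℝ (Fin m))).symm
      (0, z.snd)) ∈ VperpSet d m := rfl
  refine le_trans (Metric.infDist_le_dist_of_mem hw) ?_
  rw [WithLp.prod_dist_eq_of_L2]
  have e1 : ((WithLp.equiv 2 (EuclideanSpace ℝ (Fin d) × EuclideanSpace ℝ (Fin m))).symm
      (0, z.snd) : GraphSpace d m).fst = 0 := rfl
  have e2 : ((WithLp.equiv 2 (EuclideanSpace ℝ (Fin d) × EuclideanSpace ℝ (Fin m))).symm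
      (0, z.snd) : GraphSpace d m).snd = z.snd := rfl
  rw [e1, e2, dist_self, dist_zero_right]
  have : ‖z.fst‖ = ‖proj1 z‖ := rfl
  rw [← this]
  simp [Real.sqrt_sq (norm_nonneg _)]

lemma graphMap_dist_le {L : ℝ} (hL : 1 ≤ L)
    (f : EuclideanSpace ℝ (Fin d) → EuclideanSpace ℝ (Fin m))
    (hf : LipschitzWith (Real.toNNReal L) f) (s t : EuclideanSpace ℝ (Fin d)) :
    dist (graphMap f s) (graphMap f t) ≤ 2 * L * dist s t := by
  have hfst : dist (graphMap f s).fst (graphMap f t).fst = dist s t := rfl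
  have hsnd : dist (graphMap f s).snd (graphMap f t).snd = dist (f s) (f t) := rfl
  have hb : dist (f s) (f t) ≤ L * dist s t := by
    have := hf.dist_le_mul s t
    rwa [Real.coe_toNNReal _ (by linarith)] at this
  rw [WithLp.prod_dist_eq_of_L2, hfst, hsnd]
  have h1 : Real.sqrt (dist s t ^ 2 + dist (f s) (f t) ^ 2) ≤ dist s t + dist (f s) (f t) := by
    rw [show dist s t + dist (f s) (f t) =
        Real.sqrt ((dist s t + dist (f s) (f t)) ^ 2) from
      (Real.sqrt_sq (by positivity)).symm]
    apply Real.sqrt_le_sqrt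
    nlinarith [dist_nonneg (x := s) (y := t), dist_nonneg (x := f s) (y := f t)]
  nlinarith [dist_nonneg (x := s) (y := t)]

end Aux

theorem stmt16 (θ : ℝ) (hθ : θ ∈ Ioo 0 (Real.pi / 2)) (A : ℝ) (hA : 1 ≤ A) :
    ∃ C : ℝ, 0 < C ∧
    ∀ (d m : ℕ), 0 < d → 0 < m →
    ∀ (r : ℝ), 0 < r →
    ∀ (E K : Set (GraphSpace d m)), IsCompact K → K ⊆ E →
      EMetric.diam K < ENNReal.ofReal r →
      (∀ x ∈ K, ∀ y ∈ E, y ∈ ball x r → ¬ InPerpCone θ x y) →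
    ∀ (f : EuclideanSpace ℝ (Fin d) → EuclideanSpace ℝ (Fin m)),
      LipschitzWith (Real.toNNReal (1 / Real.cos θ)) f →
      (∀ x ∈ K, graphMap f (proj1 x) = x) →
    ∀ (x' : GraphSpace d m) (ρ : ℝ), K ⊆ ball x' ρ →
      (∀ x ∈ K, ball x' ρ ⊆ ball x r) →
    ∀ (S : Set (EuclideanSpace ℝ (Fin d))), IsCube S →
      Disjoint S (proj1 '' K) →
      setEDist S (proj1 '' K) ≤ ENNReal.ofReal A * EMetric.diam S →
      EMetric.diam S ≤ ENNReal.ofReal A * setEDist S (proj1 '' K) →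
      ∀ y ∈ whitneyPiece S (badPart θ r E K (ball x' ρ)),
        EMetric.infEdist y (Set.range (graphMap f)) ≤
          ENNReal.ofReal C * EMetric.diam S := by

  obtain ⟨hθ0, hθπ⟩ := hθ
  have hcos : 0 < Real.cos θ := Real.cos_pos_of_mem_Ioo ⟨by linarith [Real.pi_pos], hθπ⟩
  set L : ℝ := 1 / Real.cos θ with hLdef
  have hL1 : 1 ≤ L := by
    rw [hLdef, le_div_iff₀ hcos, one_mul]; exact Real.cos_le_one θ
  have hL0 : 0 < L := by positivity
  refine ⟨3 * L * (A + 2), by positivity, ?_⟩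
  intro d m hd hm r hr E K hK hKE hdiamK hcone f hf hgraph x' ρ hKball hball S hS hdisj hSd hdS
    y hy
  obtain ⟨c, l, hl, rfl⟩ := hS
  set S : Set (EuclideanSpace ℝ (Fin d)) := {t | ∀ i, c i ≤ t i ∧ t i ≤ c i + l} with hSdef
  set D : ℝ≥0∞ := EMetric.diam S with hDdef
  have hcS : c ∈ S := fun i => ⟨le_refl _, by linarith⟩
  have i0 : Fin d := ⟨0, hd⟩
  have hc'S : WithLp.toLp 2 (Function.update c.ofLp i0 (c i0 + l)) ∈ S := by
    intro i
    rcases eq_or_ne i i0 with h | h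
    · subst h; simp [Function.update_self]; linarith
    · simp [Function.update_of_ne h]; linarith
  have hD0 : D ≠ 0 := by
    intro h
    have h1 := (EMetric.diam_eq_zero_iff.1 h) hc'S hcS
    have h2 := congrArg (fun v : EuclideanSpace ℝ (Fin d) => v i0) h1
    simp [Function.update_self] at h2
    linarith
  have hDtop : D ≠ ⊤ := by
    refine Bornology.IsBounded.ediam_ne_top ((Metric.isBounded_closedBall
      (x := c) (r := l * Real.sqrt d)).subset ?_)
    intro t ht
    have h1 : dist t c ≤ Real.sqrt (∑ i : Fin d, l ^ 2) := by
      rw [EuclideanSpace.dist_eq]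
      apply Real.sqrt_le_sqrt
      apply Finset.sum_le_sum
      intro i _
      have := (ht i).1; have := (ht i).2
      rw [Real.dist_eq]
      nlinarith [abs_nonneg (t i - c i), sq_abs (t i - c i)]
    have h2 : Real.sqrt (∑ i : Fin d, l ^ 2) = l * Real.sqrt d := by
      rw [Finset.sum_const, Finset.card_univ, Fintype.card_fin, nsmul_eq_mul,
        Real.sqrt_mul (by positivity : (0:ℝ) ≤ (d:ℝ)) (l ^ 2), Real.sqrt_sq hl.le]
      ring
    simp only [Metric.mem_closedBall]
    linarith
  set Dr : ℝ := D.toReal with hDrdef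
  have hDr0 : 0 < Dr := ENNReal.toReal_pos hD0 hDtop
  have hDeq : D = ENNReal.ofReal Dr := (ENNReal.ofReal_toReal hDtop).symm
  obtain ⟨⟨⟨hyE, hyB'⟩, hbad⟩, hyS⟩ := hy
  have hsd : setEDist S (proj1 '' K) < ENNReal.ofReal (A + 1) * D := by
    refine lt_of_le_of_lt hSd ?_
    rw [hDeq]
    refine (ENNReal.mul_lt_mul_iff_left (by simp [ENNReal.ofReal_eq_zero]; linarith) ENNReal.ofReal_ne_top).2 ?_
    exact (ENNReal.ofReal_lt_ofReal_iff_of_nonneg (by linarith)).2 (by linarith)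
  obtain ⟨s₀, hs₀S, hs₀⟩ : ∃ s₀ ∈ S, EMetric.infEdist s₀ (proj1 '' K)
      < ENNReal.ofReal (A + 1) * D := by
    simp only [setEDist, iInf_lt_iff] at hsd
    obtain ⟨s₀, h1, h2⟩ := hsd
    exact ⟨s₀, h1, h2⟩
  have hxlt : EMetric.infEdist (proj1 y) (proj1 '' K) < ENNReal.ofReal ((A + 2) * Dr) := by
    calc EMetric.infEdist (proj1 y) (proj1 '' K)
        ≤ edist (proj1 y) s₀ + EMetric.infEdist s₀ (proj1 '' K) :=
          EMetric.infEdist_le_edist_add_infEdist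
      _ < D + ENNReal.ofReal (A + 1) * D :=
          ENNReal.add_lt_add_of_le_of_lt (edist_ne_top _ _)
            (EMetric.edist_le_diam_of_mem hyS hs₀S) hs₀
      _ = ENNReal.ofReal ((A + 2) * Dr) := by
          rw [hDeq, ← ENNReal.ofReal_mul (by linarith : (0:ℝ) ≤ A + 1),
            ← ENNReal.ofReal_add hDr0.le (by positivity)]
          congr 1; ring
  obtain ⟨px, hpx, hpxlt⟩ := EMetric.infEdist_lt_iff.1 hxlt
  obtain ⟨x, hxK, rfl⟩ := hpx
  have hdpp : dist (proj1 y) (proj1 x) < (A + 2) * Dr := by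
    rwa [edist_lt_ofReal] at hpxlt
  have hnc : ¬ InPerpCone θ x y := fun h => hbad x hxK ⟨hball x hxK hyB', h⟩
  have hkey : Real.cos θ * dist y x ≤ dist (proj1 y) (proj1 x) := by
    unfold InPerpCone at hnc
    push_neg at hnc
    calc Real.cos θ * dist y x ≤ Metric.infDist (y - x) (VperpSet d m) := hnc
      _ ≤ ‖proj1 (y - x)‖ := infDist_vperp_le _
      _ = dist (proj1 y) (proj1 x) := by rw [proj1_sub, ← dist_eq_norm]
  have hdyx : dist y x ≤ L * dist (proj1 y) (proj1 x) := by
    rw [hLdef, div_mul_eq_mul_div, le_div_iff₀ hcos, one_mul, mul_comm]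
    exact hkey
  have hchain : dist y (graphMap f (proj1 y)) ≤ 3 * L * ((A + 2) * Dr) := by
    have h1 := dist_triangle y x (graphMap f (proj1 y))
    have h2 : dist x (graphMap f (proj1 y))
        = dist (graphMap f (proj1 x)) (graphMap f (proj1 y)) := by rw [hgraph x hxK]
    have h3 := graphMap_dist_le hL1 f hf (proj1 x) (proj1 y)
    rw [dist_comm (proj1 x) (proj1 y)] at h3
    nlinarith [dist_nonneg (x := proj1 y) (y := proj1 x)]
  calc EMetric.infEdist y (Set.range (graphMap f))
      ≤ edist y (graphMap f (proj1 y)) :=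
        EMetric.infEdist_le_edist_of_mem (Set.mem_range_self _)
    _ = ENNReal.ofReal (dist y (graphMap f (proj1 y))) := edist_dist _ _
    _ ≤ ENNReal.ofReal (3 * L * ((A + 2) * Dr)) := ENNReal.ofReal_le_ofReal hchain
    _ = ENNReal.ofReal (3 * L * (A + 2)) * D := by
        rw [hDeq, ← ENNReal.ofReal_mul (by positivity)]
        congr 1; ring
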